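/- arXiv:0912.2929 — 6 statements merged into one kernel-verified Lean document; each statement's English description precedes it below -/
import Mathlib

section
/- Let M be a loopless matroid on a finite set E with |E| = m elements and rank r(M) = r. If there exists a cyclic ordering e₁, …, e_m of the elements of E (a bijection from ZMod m to E) such that every r cyclically consecutive elements form a base of M, then for every subset A ⊆ E we have r · |A| ≤ m · r(A). -/
open Set

/-- The rank of a set `A` in a matroid `M`: the largest size of an independent subset of `A`. -/
noncomputable def mRank {α : Type*} (M : Matroid α) (A : Set α) : ℕ :=
  sSup {n : ℕ | ∃ I ⊆ A, M.Indep I ∧ I.ncard = n}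

/-- The cyclic interval of `w` consecutive residues starting at `s` in `ZMod D`. -/
def cycInt {D : ℕ} (w : ℕ) (s : ZMod D) : Set (ZMod D) :=
  {x | ∃ k : ℕ, k < w ∧ x = s + (k : ZMod D)}

theorem stmt_2 {α : Type*} [Fintype α] (M : Matroid α) (hE : M.E = Set.univ)
    (hloop : ∀ e : α, M.Indep {e}) (m r : ℕ)
    (hm : m = Fintype.card α) (hr : r = mRank M Set.univ)
    (σ : ZMod m ≃ α)
    (hσ : ∀ i : ZMod m, M.IsBase (σ '' cycInt r i)) :
    ∀ A : Finset α, r * A.card ≤ m * mRank M (A : Set α) := by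
  intro A
  rcases Nat.eq_zero_or_pos m with hm0 | hmpos
  · have hcard : Fintype.card α = 0 := by omega
    haveI : IsEmpty α := Fintype.card_eq_zero_iff.mp hcard
    have : A = ∅ := Finset.eq_empty_of_isEmpty A
    simp [this]
  haveI : NeZero m := ⟨hmpos.ne'⟩
  -- rank bounds
  have hbdd : ∀ (S : Set α), BddAbove {n : ℕ | ∃ I ⊆ S, M.Indep I ∧ I.ncard = n} := by
    intro S
    refine ⟨Fintype.card α, ?_⟩
    rintro n ⟨I, -, -, rfl⟩
    simpa [Set.ncard_univ] using Set.ncard_le_ncard (Set.subset_univ I) Set.finite_univ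
  have hrm : r ≤ m := by
    rw [hr]
    refine csSup_le ⟨0, ∅, by simp [M.empty_indep]⟩ ?_
    rintro n ⟨I, -, -, rfl⟩
    rw [hm]
    simpa [Set.ncard_univ] using Set.ncard_le_ncard (Set.subset_univ I) Set.finite_univ
  set T : Finset (ZMod m) := (Finset.range r).image (Nat.cast : ℕ → ZMod m) with hT
  have hTcard : T.card = r := by
    rw [hT, Finset.card_image_of_injOn, Finset.card_range]
    intro a ha b hb hab
    simp only [Finset.coe_range, Set.mem_Iio] at ha hb
    have h1 : ((a : ZMod m)).val = a := ZMod.val_cast_of_lt (lt_of_lt_of_le ha hrm)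
    have h2 : ((b : ZMod m)).val = b := ZMod.val_cast_of_lt (lt_of_lt_of_le hb hrm)
    rw [← h1, ← h2, hab]
  set Bfin : ZMod m → Finset (ZMod m) := fun i => T.image (fun t => i + t) with hB
  have hC : ∀ i : ZMod m, cycInt r i = ↑(Bfin i) := by
    intro i
    ext x
    simp only [cycInt, Set.mem_setOf_eq, hB, Finset.coe_image, Set.mem_image,
      hT, Finset.coe_image, Finset.coe_range, Set.mem_Iio]
    constructor
    · rintro ⟨k, hk, rfl⟩; exact ⟨(k : ZMod m), ⟨k, hk, rfl⟩, rfl⟩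
    · rintro ⟨t, ⟨k, hk, rfl⟩, rfl⟩; exact ⟨k, hk, rfl⟩
  set A' : Finset (ZMod m) := A.image σ.symm with hA'
  have hA'card : A'.card = A.card := Finset.card_image_of_injective _ σ.symm.injective
  -- key bound: each intersection is independent, so bounded by mRank
  have hbound : ∀ i : ZMod m, (A' ∩ Bfin i).card ≤ mRank M (A : Set α) := by
    intro i
    have himg : (σ '' ((A' ∩ Bfin i : Finset (ZMod m)) : Set (ZMod m))) ⊆ (A : Set α) := by
      rintro x ⟨y, hy, rfl⟩
      simp only [Finset.coe_inter, Set.mem_inter_iff, hA', Finset.coe_image,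
        Set.mem_image, Finset.mem_coe] at hy
      obtain ⟨⟨a, ha, rfl⟩, -⟩ := hy
      simpa using ha
    have hindep : M.Indep (σ '' ((A' ∩ Bfin i : Finset (ZMod m)) : Set (ZMod m))) := by
      refine ((hσ i).indep).subset ?_
      rw [hC i]
      exact Set.image_mono (by simp [Finset.coe_inter, Set.inter_subset_right])
    have hn : (σ '' ((A' ∩ Bfin i : Finset (ZMod m)) : Set (ZMod m))).ncard
        = (A' ∩ Bfin i).card := by
      rw [Set.ncard_image_of_injective _ σ.injective, Set.ncard_coe_finset]
    exact le_csSup (hbdd _) ⟨_, himg, hindep, hn⟩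
  -- double counting
  have hcount : ∀ a : ZMod m, (Finset.univ.filter (fun i => a ∈ Bfin i)).card = r := by
    intro a
    have : Finset.univ.filter (fun i => a ∈ Bfin i) = T.image (fun t => a - t) := by
      ext i
      simp only [Finset.mem_filter, Finset.mem_univ, true_and, hB, Finset.mem_image]
      constructor
      · rintro ⟨t, ht, hit⟩; exact ⟨t, ht, by rw [← hit]; ring⟩
      · rintro ⟨t, ht, rfl⟩; exact ⟨t, ht, by ring⟩
    rw [this, Finset.card_image_of_injective _ (sub_right_injective), hTcard]
  have hsum : ∑ i : ZMod m, (A' ∩ Bfin i).card = r * A.card := by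
    have h1 : ∀ i : ZMod m, (A' ∩ Bfin i).card = ∑ a ∈ A', if a ∈ Bfin i then 1 else 0 := by
      intro i
      rw [← Finset.filter_mem_eq_inter, Finset.card_filter]
    simp_rw [h1]
    rw [Finset.sum_comm]
    have h2 : ∀ a ∈ A', (∑ i : ZMod m, if a ∈ Bfin i then 1 else 0) = r := by
      intro a _
      rw [← Finset.card_filter]
      exact hcount a
    rw [Finset.sum_congr rfl h2, Finset.sum_const, smul_eq_mul, hA'card, mul_comm]
  calc r * A.card = ∑ i : ZMod m, (A' ∩ Bfin i).card := hsum.symm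
    _ ≤ ∑ _i : ZMod m, mRank M (A : Set α) := Finset.sum_le_sum (fun i _ => hbound i)
    _ = m * mRank M (A : Set α) := by
        rw [Finset.sum_const, smul_eq_mul, Finset.card_univ, ZMod.card]
end

section
/- Let M be a loopless matroid on a finite nonempty set E. Then the arboricity Υ(M) (the minimum number of bases covering E) equals ⌈γ(M)⌉, where γ(M) = max over nonempty A ⊆ E of |A| / r(A). -/
open Set

open Finset

/-- A finite independence system satisfying the matroid axioms, on `Finset`s. -/
structure IndSys (β : Type*) [DecidableEq β] where
  Ind : Finset β → Prop
  indep_empty : Ind ∅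
  subset_closed : ∀ ⦃I J : Finset β⦄, Ind J → I ⊆ J → Ind I
  augment : ∀ ⦃I J : Finset β⦄, Ind I → Ind J → I.card < J.card →
    ∃ e, e ∈ J ∧ e ∉ I ∧ Ind (insert e I)

namespace IndSys

variable {β : Type*} [DecidableEq β] (S : IndSys β)

/-- The rank of a finite set: max size of an independent subset. -/
noncomputable def rk (A : Finset β) : ℕ :=
  sSup {n : ℕ | ∃ I, I ⊆ A ∧ S.Ind I ∧ I.card = n}

lemma rk_bddAbove (A : Finset β) : BddAbove {n : ℕ | ∃ I, I ⊆ A ∧ S.Ind I ∧ I.card = n} := by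
  refine ⟨A.card, fun n hn => ?_⟩
  obtain ⟨I, hIA, _, rfl⟩ := hn
  exact Finset.card_le_card hIA

lemma card_le_rk {A I : Finset β} (hIA : I ⊆ A) (hI : S.Ind I) : I.card ≤ S.rk A :=
  le_csSup (S.rk_bddAbove A) ⟨I, hIA, hI, rfl⟩

lemma exists_rk (A : Finset β) : ∃ I, I ⊆ A ∧ S.Ind I ∧ I.card = S.rk A := by
  have hne : {n : ℕ | ∃ I, I ⊆ A ∧ S.Ind I ∧ I.card = n}.Nonempty :=
    ⟨0, ∅, by simp [S.indep_empty]⟩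
  exact Nat.sSup_mem hne (S.rk_bddAbove A)

lemma rk_le_card (A : Finset β) : S.rk A ≤ A.card := by
  obtain ⟨I, hIA, _, hc⟩ := S.exists_rk A
  rw [← hc]; exact Finset.card_le_card hIA

lemma rk_mono {A B : Finset β} (h : A ⊆ B) : S.rk A ≤ S.rk B := by
  obtain ⟨I, hIA, hI, hc⟩ := S.exists_rk A
  rw [← hc]; exact S.card_le_rk (hIA.trans h) hI

lemma rk_empty : S.rk ∅ = 0 := Nat.le_zero.mp (by simpa using S.rk_le_card ∅)

/-- A maximal independent subset of `A` has cardinality `rk A`. -/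
lemma card_eq_rk_of_maximal {A I : Finset β} (hIA : I ⊆ A) (hI : S.Ind I)
    (hmax : ∀ e ∈ A, e ∉ I → ¬ S.Ind (insert e I)) : I.card = S.rk A := by
  refine le_antisymm (S.card_le_rk hIA hI) ?_
  by_contra hlt
  push_neg at hlt
  obtain ⟨J, hJA, hJ, hc⟩ := S.exists_rk A
  obtain ⟨e, heJ, heI, hins⟩ := S.augment hI hJ (by omega)
  exact hmax e (hJA heJ) heI hins

/-- Every independent subset of `A` extends to one of full rank. -/
lemma exists_extend {A I : Finset β} (hIA : I ⊆ A) (hI : S.Ind I) :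
    ∃ J, I ⊆ J ∧ J ⊆ A ∧ S.Ind J ∧ J.card = S.rk A := by
  by_cases hmax : ∀ e ∈ A, e ∉ I → ¬ S.Ind (insert e I)
  · exact ⟨I, le_refl I, hIA, hI, S.card_eq_rk_of_maximal hIA hI hmax⟩
  · push_neg at hmax
    obtain ⟨e, heA, heI, hins⟩ := hmax
    have hcard : A.card - (insert e I).card < A.card - I.card := by
      have h1 : I.card < (insert e I).card := by
        rw [Finset.card_insert_of_notMem heI]; omega
      have h2 : (insert e I).card ≤ A.card :=
        Finset.card_le_card (Finset.insert_subset heA hIA)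
      omega
    obtain ⟨J, hIJ, hJA, hJ, hc⟩ := exists_extend (Finset.insert_subset heA hIA) hins
    exact ⟨J, (Finset.subset_insert e I).trans hIJ, hJA, hJ, hc⟩
termination_by A.card - I.card

lemma rk_submod (A B : Finset β) :
    S.rk (A ∪ B) + S.rk (A ∩ B) ≤ S.rk A + S.rk B := by
  obtain ⟨I, hIint, hI, hIc⟩ := S.exists_rk (A ∩ B)
  obtain ⟨J, hIJ, hJU, hJ, hJc⟩ := S.exists_extend (hIint.trans (Finset.inter_subset_union)) hI
  have h1 : (J ∩ A).card + (J ∩ B).card = J.card + (J ∩ (A ∩ B)).card := by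
    rw [← Finset.card_union_add_card_inter]
    have hu : (J ∩ A) ∪ (J ∩ B) = J := by
      rw [← Finset.inter_union_distrib_left]
      exact Finset.inter_eq_left.mpr hJU
    have hi : (J ∩ A) ∩ (J ∩ B) = J ∩ (A ∩ B) := by
      ext x; simp; tauto
    rw [hu, hi]
  have hA : (J ∩ A).card ≤ S.rk A :=
    S.card_le_rk Finset.inter_subset_right (S.subset_closed hJ Finset.inter_subset_left)
  have hB : (J ∩ B).card ≤ S.rk B :=
    S.card_le_rk Finset.inter_subset_right (S.subset_closed hJ Finset.inter_subset_left)
  have hInt : I.card ≤ (J ∩ (A ∩ B)).card :=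
    Finset.card_le_card (Finset.subset_inter hIJ hIint)
  omega

lemma rk_insert_le (e : β) (A : Finset β) : S.rk (insert e A) ≤ S.rk A + 1 := by
  obtain ⟨J, hJA, hJ, hc⟩ := S.exists_rk (insert e A)
  have h1 : J.erase e ⊆ A := by
    intro x hx
    rcases Finset.mem_erase.mp hx with ⟨hne, hxJ⟩
    rcases Finset.mem_insert.mp (hJA hxJ) with h | h
    · exact absurd h hne
    · exact h
  have h2 : (J.erase e).card ≤ S.rk A :=
    S.card_le_rk h1 (S.subset_closed hJ (Finset.erase_subset e J))
  have h3 : J.card ≤ (J.erase e).card + 1 := by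
    by_cases he : e ∈ J
    · rw [Finset.card_erase_of_mem he]; omega
    · rw [Finset.erase_eq_of_notMem he]; omega
  omega

lemma rk_insert_loop {e : β} (he : ¬ S.Ind {e}) (A : Finset β) :
    S.rk (insert e A) = S.rk A := by
  refine le_antisymm ?_ (S.rk_mono (Finset.subset_insert e A))
  obtain ⟨J, hJA, hJ, hc⟩ := S.exists_rk (insert e A)
  have heJ : e ∉ J := fun h => he (S.subset_closed hJ (by simpa using h))
  have hJA' : J ⊆ A := fun x hx => by
    rcases Finset.mem_insert.mp (hJA hx) with h | h
    · exact absurd (h ▸ hx) heJ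
    · exact h
  rw [← hc]; exact S.card_le_rk hJA' hJ

/-- Contraction of a single non-loop element. -/
def contract (e : β) (he : S.Ind {e}) : IndSys β where
  Ind I := e ∉ I ∧ S.Ind (insert e I)
  indep_empty := ⟨by simp, by simpa using he⟩
  subset_closed := by
    rintro I J ⟨heJ, hJ⟩ hIJ
    exact ⟨fun h => heJ (hIJ h), S.subset_closed hJ (Finset.insert_subset_insert e hIJ)⟩
  augment := by
    rintro I J ⟨heI, hI⟩ ⟨heJ, hJ⟩ hc
    have hc' : (insert e I).card < (insert e J).card := by
      rw [Finset.card_insert_of_notMem heI, Finset.card_insert_of_notMem heJ]; omega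
    obtain ⟨x, hxJ, hxI, hins⟩ := S.augment hI hJ hc'
    have hxe : x ≠ e := fun h => hxI (h ▸ Finset.mem_insert_self e I)
    refine ⟨x, ?_, ?_, ?_, ?_⟩
    · rcases Finset.mem_insert.mp hxJ with h | h
      · exact absurd h hxe
      · exact h
    · exact fun h => hxI (Finset.mem_insert_of_mem h)
    · simp only [Finset.mem_insert, not_or]
      exact ⟨fun h => hxe h.symm, heI⟩
    · rwa [Finset.insert_comm] at hins

lemma rk_contract {e : β} (he : S.Ind {e}) {A : Finset β} (heA : e ∉ A) :
    (S.contract e he).rk A + 1 = S.rk (insert e A) := by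
  refine le_antisymm ?_ ?_
  · obtain ⟨I, hIA, ⟨heI, hI⟩, hc⟩ := (S.contract e he).exists_rk A
    have h1 : insert e I ⊆ insert e A := Finset.insert_subset_insert e hIA
    have h2 := S.card_le_rk h1 hI
    rw [Finset.card_insert_of_notMem heI] at h2
    omega
  · obtain ⟨J, hIJ, hJA, hJ, hc⟩ :=
      S.exists_extend (A := insert e A) (I := {e}) (by simp) he
    have heJ : e ∈ J := hIJ (by simp)
    have h1 : J.erase e ⊆ A := by
      intro x hx
      rcases Finset.mem_erase.mp hx with ⟨hne, hxJ⟩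
      rcases Finset.mem_insert.mp (hJA hxJ) with h | h
      · exact absurd h hne
      · exact h
    have h2 : (S.contract e he).Ind (J.erase e) := by
      refine ⟨Finset.notMem_erase e J, ?_⟩
      rwa [Finset.insert_erase heJ]
    have h3 := (S.contract e he).card_le_rk h1 h2
    rw [Finset.card_erase_of_mem heJ] at h3
    have h4 : 1 ≤ J.card := Finset.card_pos.mpr ⟨e, heJ⟩
    omega

/-- The hard direction of the matroid intersection theorem. -/
lemma inter_min : ∀ (n : ℕ) (S₁ S₂ : IndSys β) (G : Finset β), G.card ≤ n →
    ∀ m : ℕ, (∀ A ⊆ G, m ≤ S₁.rk A + S₂.rk (G \ A)) →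
    ∃ I, I ⊆ G ∧ S₁.Ind I ∧ S₂.Ind I ∧ m ≤ I.card := by
  intro n
  induction n with
  | zero =>
    intro S₁ S₂ G hG m h
    have hGe : G = ∅ := Finset.card_eq_zero.mp (Nat.le_zero.mp hG)
    refine ⟨∅, by simp, S₁.indep_empty, S₂.indep_empty, ?_⟩
    have := h ∅ (by simp)
    simpa [hGe, S₁.rk_empty, S₂.rk_empty] using this
  | succ n IH =>
    intro S₁ S₂ G hG m h
    rcases Finset.eq_empty_or_nonempty G with rfl | ⟨e, heG⟩
    · refine ⟨∅, by simp, S₁.indep_empty, S₂.indep_empty, ?_⟩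
      simpa [S₁.rk_empty, S₂.rk_empty] using h ∅ (by simp)
    set G' := G.erase e with hG'
    have hG'sub : G' ⊆ G := Finset.erase_subset e G
    have hG'card : G'.card ≤ n := by
      rw [hG', Finset.card_erase_of_mem heG]; omega
    have heG' : e ∉ G' := Finset.notMem_erase e G
    by_cases h1 : S₁.Ind {e}
    case neg =>
      -- e is a loop in S₁ : delete it
      have h' : ∀ A ⊆ G', m ≤ S₁.rk A + S₂.rk (G' \ A) := by
        intro A hA
        have heA : e ∉ A := fun hc => heG' (hA hc)
        have := h (insert e A) (Finset.insert_subset heG (hA.trans hG'sub))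
        rwa [S₁.rk_insert_loop h1, show G \ insert e A = G' \ A by
          ext x; simp [hG', Finset.mem_erase]; tauto] at this
      obtain ⟨I, hIG, hi1, hi2, hm⟩ := IH S₁ S₂ G' hG'card m h'
      exact ⟨I, hIG.trans hG'sub, hi1, hi2, hm⟩
    by_cases h2 : S₂.Ind {e}
    case neg =>
      have h' : ∀ A ⊆ G', m ≤ S₁.rk A + S₂.rk (G' \ A) := by
        intro A hA
        have heA : e ∉ A := fun hc => heG' (hA hc)
        have := h A (hA.trans hG'sub)
        have hset : G \ A = insert e (G' \ A) := by
          ext x; simp [hG', Finset.mem_erase]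
          constructor
          · rintro ⟨hx, hx2⟩
            by_cases hxe : x = e
            · exact Or.inl hxe
            · exact Or.inr ⟨⟨hxe, hx⟩, hx2⟩
          · rintro (rfl | ⟨⟨_, hx⟩, hx2⟩)
            · exact ⟨heG, heA⟩
            · exact ⟨hx, hx2⟩
        rwa [hset, S₂.rk_insert_loop h2] at this
      obtain ⟨I, hIG, hi1, hi2, hm⟩ := IH S₁ S₂ G' hG'card m h'
      exact ⟨I, hIG.trans hG'sub, hi1, hi2, hm⟩
    -- main case : e is not a loop in either matroid
    by_contra hno
    push_neg at hno
    have hm1 : 1 ≤ m := by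
      by_contra hm0
      have := hno ∅ (by simp) S₁.indep_empty S₂.indep_empty
      omega
    -- apply IH to the deletion
    have hdel : ∃ A, A ⊆ G' ∧ S₁.rk A + S₂.rk (G' \ A) + 1 ≤ m := by
      by_contra hc
      push_neg at hc
      obtain ⟨I, hIG, hi1, hi2, hm'⟩ := IH S₁ S₂ G' hG'card m
        (fun A hA => by have := hc A hA; omega)
      have := hno I (hIG.trans hG'sub) hi1 hi2
      omega
    -- apply IH to the contraction
    have hcon : ∃ B, B ⊆ G' ∧
        (S₁.contract e h1).rk B + (S₂.contract e h2).rk (G' \ B) + 1 ≤ m - 1 := by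
      by_contra hc
      push_neg at hc
      obtain ⟨I, hIG, ⟨heI1, hi1⟩, ⟨heI2, hi2⟩, hm'⟩ :=
        IH (S₁.contract e h1) (S₂.contract e h2) G' hG'card (m - 1)
        (fun A hA => by have := hc A hA; omega)
      have hIe : insert e I ⊆ G := Finset.insert_subset heG (hIG.trans hG'sub)
      have := hno (insert e I) hIe hi1 hi2
      rw [Finset.card_insert_of_notMem heI1] at this
      omega
    obtain ⟨A, hAG', hAle⟩ := hdel
    obtain ⟨B, hBG', hBle⟩ := hcon
    have heA : e ∉ A := fun hc => heG' (hAG' hc)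
    have heB : e ∉ B := fun hc => heG' (hBG' hc)
    have heGB : e ∉ G' \ B := fun hc => heG' (Finset.mem_sdiff.mp hc).1
    have hr1 : S₁.rk (insert e B) = (S₁.contract e h1).rk B + 1 :=
      (S₁.rk_contract h1 heB).symm
    have hr2 : S₂.rk (insert e (G' \ B)) = (S₂.contract e h2).rk (G' \ B) + 1 :=
      (S₂.rk_contract h2 heGB).symm
    have hsetB : insert e (G' \ B) = G \ B := by
      ext x; simp [hG', Finset.mem_erase]
      constructor
      · rintro (rfl | ⟨⟨_, hx⟩, hx2⟩)
        · exact ⟨heG, heB⟩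
        · exact ⟨hx, hx2⟩
      · rintro ⟨hx, hx2⟩
        by_cases hxe : x = e
        · exact Or.inl hxe
        · exact Or.inr ⟨⟨hxe, hx⟩, hx2⟩
    have hkey : S₁.rk (insert e B) + S₂.rk (G \ B) ≤ m := by
      rw [hr1, ← hsetB, hr2]; omega
    -- two applications of the hypothesis h
    have hAB : A ∩ B ⊆ G := (Finset.inter_subset_left).trans (hAG'.trans hG'sub)
    have hABe : insert e (A ∪ B) ⊆ G :=
      Finset.insert_subset heG ((Finset.union_subset hAG' hBG').trans hG'sub)
    have hh1 := h (A ∩ B) hAB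
    have hh2 := h (insert e (A ∪ B)) hABe
    -- submodularity for S₁
    have hs1 : S₁.rk (insert e (A ∪ B)) + S₁.rk (A ∩ B) ≤ S₁.rk A + S₁.rk (insert e B) := by
      have := S₁.rk_submod A (insert e B)
      rwa [show A ∪ insert e B = insert e (A ∪ B) from Finset.union_insert e A B,
        show A ∩ insert e B = A ∩ B by
          ext x
          by_cases hxe : x = e
          · subst hxe; simp [heA, heB]
          · simp [hxe]] at this
    -- submodularity for S₂
    have hs2 : S₂.rk (G \ (A ∩ B)) + S₂.rk (G \ insert e (A ∪ B)) ≤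
        S₂.rk (G' \ A) + S₂.rk (G \ B) := by
      have := S₂.rk_submod (G' \ A) (G \ B)
      rwa [show (G' \ A) ∪ (G \ B) = G \ (A ∩ B) by
          ext x
          by_cases hxe : x = e
          · subst hxe; simp [hG', heG, heA, heB]
          · simp [hG', Finset.mem_erase, hxe]; tauto,
        show (G' \ A) ∩ (G \ B) = G \ insert e (A ∪ B) by
          ext x
          by_cases hxe : x = e
          · subst hxe; simp [hG']
          · simp [hG', Finset.mem_erase, hxe]; tauto] at this
    omega

end IndSys

section Cover

open Finset

variable {α : Type*} [DecidableEq α] [Fintype α]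

/-- The `i`-th slice of a subset of `α × Fin k`. -/
def IndSys.slice {k : ℕ} (I : Finset (α × Fin k)) (i : Fin k) : Finset α :=
  (I.filter fun p => p.2 = i).image Prod.fst

lemma IndSys.mem_slice {k : ℕ} {I : Finset (α × Fin k)} {i : Fin k} {x : α} :
    x ∈ IndSys.slice I i ↔ (x, i) ∈ I := by
  unfold IndSys.slice
  simp only [Finset.mem_image, Finset.mem_filter, Prod.exists]
  constructor
  · rintro ⟨a, b, ⟨hI, rfl⟩, rfl⟩; exact hI
  · intro h; exact ⟨x, i, ⟨h, rfl⟩, rfl⟩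

lemma IndSys.card_slice {k : ℕ} (I : Finset (α × Fin k)) (i : Fin k) :
    (IndSys.slice I i).card = (I.filter fun p => p.2 = i).card := by
  apply Finset.card_image_of_injOn
  rintro ⟨a, b⟩ hab ⟨c, d⟩ hcd h
  simp only [Finset.mem_coe, Finset.mem_filter] at hab hcd
  simp only at h
  ext <;> simp [h, hab.2, hcd.2]

lemma IndSys.card_eq_sum_slice {k : ℕ} (I : Finset (α × Fin k)) :
    I.card = ∑ i : Fin k, (IndSys.slice I i).card := by
  simp only [IndSys.card_slice]
  exact Finset.card_eq_sum_card_fiberwise (fun p _ => Finset.mem_univ p.2)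

/-- Direct sum of `k` copies of `S` on `α × Fin k`. -/
def IndSys.sys1 (S : IndSys α) (k : ℕ) : IndSys (α × Fin k) where
  Ind I := ∀ i, S.Ind (IndSys.slice I i)
  indep_empty := by
    intro i
    have : IndSys.slice (∅ : Finset (α × Fin k)) i = ∅ := by
      ext x; simp [IndSys.mem_slice]
    rw [this]; exact S.indep_empty
  subset_closed := by
    intro I J hJ hIJ i
    refine S.subset_closed (hJ i) ?_
    intro x hx
    rw [IndSys.mem_slice] at hx ⊢
    exact hIJ hx
  augment := by
    intro I J hI hJ hc
    rw [IndSys.card_eq_sum_slice I, IndSys.card_eq_sum_slice J] at hc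
    obtain ⟨i, _, hlt⟩ := Finset.exists_lt_of_sum_lt hc
    obtain ⟨x, hxJ, hxI, hins⟩ := S.augment (hI i) (hJ i) hlt
    refine ⟨(x, i), IndSys.mem_slice.mp hxJ, fun h => hxI (IndSys.mem_slice.mpr h), ?_⟩
    intro j
    by_cases hij : j = i
    · subst hij
      have heq : IndSys.slice (insert (x, j) I) j = insert x (IndSys.slice I j) := by
        ext y
        simp only [IndSys.mem_slice, Finset.mem_insert, Prod.mk.injEq, and_true]
      rw [heq]; exact hins
    · have heq : IndSys.slice (insert (x, i) I) j = IndSys.slice I j := by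
        ext y
        simp only [IndSys.mem_slice, Finset.mem_insert, Prod.mk.injEq]
        have : ¬ (y = x ∧ j = i) := fun h => hij h.2
        tauto
      rw [heq]; exact hI j

/-- The partition matroid on `α × Fin k` : at most one copy of each element. -/
def IndSys.sys2 (α : Type*) [DecidableEq α] (k : ℕ) : IndSys (α × Fin k) where
  Ind I := ∀ e : α, (I.filter fun p => p.1 = e).card ≤ 1
  indep_empty := by intro e; simp
  subset_closed := by
    intro I J hJ hIJ e
    exact le_trans (Finset.card_le_card (Finset.filter_subset_filter _ hIJ)) (hJ e)
  augment := by
    intro I J hI hJ hc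
    have hcardI : ∀ K : Finset (α × Fin k), (∀ e : α, (K.filter fun p => p.1 = e).card ≤ 1) →
        (K.image Prod.fst).card = K.card := by
      intro K hK
      apply Finset.card_image_of_injOn
      intro p hp q hq hpq
      have h1 : p ∈ K.filter fun r => r.1 = p.1 := Finset.mem_filter.mpr ⟨hp, rfl⟩
      have h2 : q ∈ K.filter fun r => r.1 = p.1 := Finset.mem_filter.mpr ⟨hq, hpq.symm⟩
      exact Finset.card_le_one.mp (hK p.1) p h1 q h2
    have himg : (I.image Prod.fst).card < (J.image Prod.fst).card := by
      rw [hcardI I hI, hcardI J hJ]; exact hc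
    have hns : ¬ J.image Prod.fst ⊆ I.image Prod.fst :=
      fun hsub => absurd (Finset.card_le_card hsub) (by omega)
    obtain ⟨e, heJ, heI⟩ := Finset.not_subset.mp hns
    obtain ⟨p, hpJ, hpe⟩ := Finset.mem_image.mp heJ
    have hpI : p ∉ I := fun h => heI (Finset.mem_image.mpr ⟨p, h, hpe⟩)
    refine ⟨p, hpJ, hpI, ?_⟩
    intro f
    rw [Finset.filter_insert]
    split_ifs with hf
    · have h0 : I.filter (fun q => q.1 = f) = ∅ := by
        rw [Finset.eq_empty_iff_forall_notMem]
        intro q hq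
        rcases Finset.mem_filter.mp hq with ⟨hqI, hqf⟩
        exact heI (Finset.mem_image.mpr ⟨q, hqI, by rw [hqf, ← hf, hpe]⟩)
      rw [h0]
      simp
    · exact hI f

/-- Edmonds' matroid covering theorem (hard direction). -/
theorem IndSys.cover [Nonempty α] (S : IndSys α) (k : ℕ)
    (hk : ∀ A : Finset α, A.Nonempty → A.card ≤ k * S.rk A) :
    ∃ J : Fin k → Finset α, (∀ i, S.Ind (J i)) ∧ ∀ e : α, ∃ i, e ∈ J i := by
  obtain ⟨a⟩ := ‹Nonempty α›
  have hk0 : 0 < k := by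
    rcases Nat.eq_zero_or_pos k with rfl | h
    · have := hk {a} ⟨a, Finset.mem_singleton_self a⟩
      simp at this
    · exact h
  -- verify the min condition for matroid intersection
  have hmin : ∀ A ⊆ (Finset.univ : Finset (α × Fin k)),
      Fintype.card α ≤ (S.sys1 k).rk A + (IndSys.sys2 α k).rk (Finset.univ \ A) := by
    intro A _
    set T : Finset α := Finset.univ.filter (fun e => ∀ i : Fin k, (e, i) ∈ A) with hT
    -- lower bound for rk of sys1
    obtain ⟨Bas, hBasT, hBas, hBasc⟩ := S.exists_rk T
    have hsub1 : Bas ×ˢ (Finset.univ : Finset (Fin k)) ⊆ A := by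
      rintro ⟨x, i⟩ hx
      rcases Finset.mem_product.mp hx with ⟨hxB, _⟩
      have := (Finset.mem_filter.mp (hBasT hxB)).2
      exact this i
    have hind1 : (S.sys1 k).Ind (Bas ×ˢ (Finset.univ : Finset (Fin k))) := by
      intro i
      have : IndSys.slice (Bas ×ˢ (Finset.univ : Finset (Fin k))) i = Bas := by
        ext y; simp [IndSys.mem_slice, Finset.mem_product]
      rwa [this]
    have hrk1 : S.rk T * k ≤ (S.sys1 k).rk A := by
      have := (S.sys1 k).card_le_rk hsub1 hind1
      rwa [Finset.card_product, hBasc, Finset.card_univ, Fintype.card_fin] at this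
    have hTcard : T.card ≤ S.rk T * k := by
      rcases Finset.eq_empty_or_nonempty T with h | h
      · simp [h]
      · calc T.card ≤ k * S.rk T := hk T h
          _ = S.rk T * k := Nat.mul_comm _ _
    -- lower bound for rk of sys2
    have hchoice : ∀ e ∈ Finset.univ \ T, ∃ i : Fin k, (e, i) ∉ A := by
      intro e he
      rcases Finset.mem_sdiff.mp he with ⟨_, heT⟩
      by_contra hcon
      push_neg at hcon
      exact heT (Finset.mem_filter.mpr ⟨Finset.mem_univ e, hcon⟩)
    set g : α → α × Fin k := fun e =>
      if h : ∃ i : Fin k, (e, i) ∉ A then (e, h.choose) else (e, ⟨0, hk0⟩) with hg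
    have hgfst : ∀ e, (g e).1 = e := by
      intro e; simp only [hg]; split_ifs <;> rfl
    have hsub2 : (Finset.univ \ T).image g ⊆ Finset.univ \ A := by
      intro p hp
      rcases Finset.mem_image.mp hp with ⟨e, he, rfl⟩
      have hex := hchoice e he
      rw [Finset.mem_sdiff]
      refine ⟨Finset.mem_univ _, ?_⟩
      simp only [hg, dif_pos hex]
      exact hex.choose_spec
    have hind2 : (IndSys.sys2 α k).Ind ((Finset.univ \ T).image g) := by
      intro e
      rw [Finset.card_le_one]
      intro p hp q hq
      rcases Finset.mem_filter.mp hp with ⟨hp1, hp2⟩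
      rcases Finset.mem_filter.mp hq with ⟨hq1, hq2⟩
      rcases Finset.mem_image.mp hp1 with ⟨e1, _, rfl⟩
      rcases Finset.mem_image.mp hq1 with ⟨e2, _, rfl⟩
      rw [hgfst] at hp2 hq2
      rw [hp2, hq2]
    have hrk2 : (Finset.univ \ T).card ≤ (IndSys.sys2 α k).rk (Finset.univ \ A) := by
      have := (IndSys.sys2 α k).card_le_rk hsub2 hind2
      rwa [Finset.card_image_of_injOn (fun e _ f _ hef => by
        have := hgfst e; have := hgfst f
        rw [← hgfst e, ← hgfst f, hef])] at this
    have hsplit : T.card + (Finset.univ \ T).card = Fintype.card α := by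
      rw [Finset.card_sdiff_of_subset (Finset.subset_univ T), Finset.card_univ]
      have := Finset.card_le_univ T
      omega
    omega
  obtain ⟨I, _, hi1, hi2, hm⟩ := IndSys.inter_min (Fintype.card (α × Fin k))
    (S.sys1 k) (IndSys.sys2 α k) Finset.univ (by rw [Finset.card_univ]) (Fintype.card α) hmin
  -- the support of I is all of α
  have hcardI : (I.image Prod.fst).card = I.card := by
    apply Finset.card_image_of_injOn
    intro p hp q hq hpq
    have h1 : p ∈ I.filter fun r => r.1 = p.1 := Finset.mem_filter.mpr ⟨hp, rfl⟩
    have h2 : q ∈ I.filter fun r => r.1 = p.1 := Finset.mem_filter.mpr ⟨hq, hpq.symm⟩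
    exact Finset.card_le_one.mp (hi2 p.1) p h1 q h2
  have hsupp : I.image Prod.fst = Finset.univ := by
    apply Finset.eq_univ_of_card
    have := Finset.card_le_univ (I.image Prod.fst)
    omega
  refine ⟨fun i => IndSys.slice I i, hi1, ?_⟩
  intro e
  have : e ∈ I.image Prod.fst := hsupp ▸ Finset.mem_univ e
  rcases Finset.mem_image.mp this with ⟨p, hpI, hpe⟩
  exact ⟨p.2, IndSys.mem_slice.mpr (by rwa [show (e, p.2) = p from Prod.ext hpe.symm rfl])⟩

end Cover

section Bridge

variable {α : Type*} [DecidableEq α] [Fintype α]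

/-- The independence system of a matroid, on `Finset`s. -/
def matSys (M : Matroid α) : IndSys α where
  Ind I := M.Indep (I : Set α)
  indep_empty := by simpa using M.empty_indep
  subset_closed := fun I J hJ hIJ => hJ.subset (Finset.coe_subset.mpr hIJ)
  augment := by
    intro I J hI hJ hc
    have henc : (I : Set α).encard < (J : Set α).encard := by
      rw [Set.encard_coe_eq_coe_finsetCard, Set.encard_coe_eq_coe_finsetCard]
      exact_mod_cast hc
    obtain ⟨e, he, hins⟩ := hI.augment hJ henc
    rcases he with ⟨heJ, heI⟩
    refine ⟨e, by exact_mod_cast heJ, by exact_mod_cast heI, ?_⟩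
    rwa [← Finset.coe_insert] at hins

lemma mRank_eq (M : Matroid α) (A : Finset α) : mRank M (A : Set α) = (matSys M).rk A := by
  have hgreat : IsGreatest {n : ℕ | ∃ I ⊆ (A : Set α), M.Indep I ∧ I.ncard = n}
      ((matSys M).rk A) := by
    constructor
    · obtain ⟨I, hIA, hI, hc⟩ := (matSys M).exists_rk A
      exact ⟨(I : Set α), by exact_mod_cast hIA, hI, by rw [Set.ncard_coe_finset, hc]⟩
    · rintro n ⟨I, hIA, hI, rfl⟩
      have hfin : I.Finite := (A.finite_toSet).subset hIA
      have hsub : hfin.toFinset ⊆ A := by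
        intro x hx
        rw [Set.Finite.mem_toFinset] at hx
        exact_mod_cast hIA hx
      have hind : (matSys M).Ind hfin.toFinset := by
        show M.Indep _
        rwa [Set.Finite.coe_toFinset]
      have := (matSys M).card_le_rk hsub hind
      rwa [← Set.ncard_coe_finset hfin.toFinset, Set.Finite.coe_toFinset] at this
  exact hgreat.csSup_eq

end Bridge

theorem stmt_7 {α : Type*} [Fintype α] [Nonempty α] (M : Matroid α) (hE : M.E = Set.univ)
    (hloop : ∀ e : α, M.Indep {e})
    (γ : ℚ)
    (hγub : ∀ A : Finset α, A.Nonempty → (A.card : ℚ) / (mRank M (A : Set α) : ℚ) ≤ γ)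
    (hγmax : ∃ A : Finset α, A.Nonempty ∧ (A.card : ℚ) / (mRank M (A : Set α) : ℚ) = γ)
    (u : ℕ)
    (hu : IsLeast {k : ℕ | ∃ B : Fin k → Set α,
      (∀ i, M.IsBase (B i)) ∧ (⋃ i, B i) = Set.univ} u) :
    (u : ℤ) = ⌈γ⌉ := by
  classical
  set S := matSys M with hS
  have hrkpos : ∀ A : Finset α, A.Nonempty → 1 ≤ S.rk A := by
    rintro A ⟨e, he⟩
    have hind : S.Ind {e} := by
      show M.Indep _
      rw [Finset.coe_singleton]
      exact hloop e
    have := S.card_le_rk (Finset.singleton_subset_iff.mpr he) hind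
    simpa using this
  -- Lower bound : ⌈γ⌉ ≤ u
  obtain ⟨A₀, hA₀ne, hA₀eq⟩ := hγmax
  rw [mRank_eq] at hA₀eq
  have hr₀ : 1 ≤ S.rk A₀ := hrkpos A₀ hA₀ne
  have hr₀Q : (0 : ℚ) < (S.rk A₀ : ℚ) := by exact_mod_cast hr₀
  obtain ⟨B, hB, hBu⟩ := hu.1
  have hcount : A₀.card ≤ u * S.rk A₀ := by
    have hsub : A₀ ⊆ Finset.univ.biUnion
        (fun i : Fin u => A₀.filter (fun a => a ∈ B i)) := by
      intro a ha
      have : a ∈ ⋃ i, B i := hBu ▸ Set.mem_univ a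
      obtain ⟨i, hi⟩ := Set.mem_iUnion.mp this
      exact Finset.mem_biUnion.mpr ⟨i, Finset.mem_univ i, Finset.mem_filter.mpr ⟨ha, hi⟩⟩
    calc A₀.card ≤ (Finset.univ.biUnion
          (fun i : Fin u => A₀.filter (fun a => a ∈ B i))).card := Finset.card_le_card hsub
      _ ≤ ∑ i : Fin u, (A₀.filter (fun a => a ∈ B i)).card := Finset.card_biUnion_le
      _ ≤ ∑ _i : Fin u, S.rk A₀ := by
          refine Finset.sum_le_sum ?_
          intro i _
          refine S.card_le_rk (Finset.filter_subset _ _) ?_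
          show M.Indep _
          refine (hB i).indep.subset ?_
          intro x hx
          rcases Finset.mem_coe.mp hx with hx'
          exact (Finset.mem_filter.mp hx').2
      _ = u * S.rk A₀ := by rw [Finset.sum_const, Finset.card_univ, Fintype.card_fin, smul_eq_mul]
  have hγle : γ ≤ (u : ℚ) := by
    rw [← hA₀eq, div_le_iff₀ hr₀Q]
    calc (A₀.card : ℚ) ≤ ((u * S.rk A₀ : ℕ) : ℚ) := by exact_mod_cast hcount
      _ = (u : ℚ) * (S.rk A₀ : ℚ) := by push_cast; ring
  have hceil_le : ⌈γ⌉ ≤ (u : ℤ) := by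
    have := Int.ceil_le_ceil hγle
    rwa [Int.ceil_natCast] at this
  -- γ ≥ 1
  have hγ1 : 1 ≤ γ := by
    rw [← hA₀eq, le_div_iff₀ hr₀Q, one_mul]
    exact_mod_cast S.rk_le_card A₀
  have hceil1 : 1 ≤ ⌈γ⌉ := by
    have := Int.ceil_le_ceil hγ1
    simpa using this
  -- Upper bound : u ≤ ⌈γ⌉
  set k : ℕ := ⌈γ⌉.toNat with hk
  have hkZ : (k : ℤ) = ⌈γ⌉ := Int.toNat_of_nonneg (by omega)
  have hkγ : γ ≤ (k : ℚ) := by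
    have h1 : γ ≤ (⌈γ⌉ : ℚ) := Int.le_ceil γ
    have h2 : ((⌈γ⌉ : ℤ) : ℚ) = (k : ℚ) := by rw [← hkZ]; push_cast; ring
    linarith
  have hcov : ∀ A : Finset α, A.Nonempty → A.card ≤ k * S.rk A := by
    intro A hA
    have h1 := hγub A hA
    rw [mRank_eq] at h1
    have hrA : (0 : ℚ) < (S.rk A : ℚ) := by exact_mod_cast hrkpos A hA
    rw [div_le_iff₀ hrA] at h1
    have h2 : (A.card : ℚ) ≤ (k : ℚ) * (S.rk A : ℚ) := le_trans h1 (by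
      have := mul_le_mul_of_nonneg_right hkγ (le_of_lt hrA)
      linarith)
    exact_mod_cast h2
  obtain ⟨J, hJind, hJcov⟩ := S.cover k hcov
  have hbases : ∀ i : Fin k, ∃ Bi : Set α, M.IsBase Bi ∧ (J i : Set α) ⊆ Bi := by
    intro i
    obtain ⟨Bi, hBi, hsub⟩ := (hJind i).exists_isBase_superset
    exact ⟨Bi, hBi, hsub⟩
  choose Bf hBf hBfsub using hbases
  have hkmem : k ∈ {k : ℕ | ∃ B : Fin k → Set α,
      (∀ i, M.IsBase (B i)) ∧ (⋃ i, B i) = Set.univ} := by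
    refine ⟨Bf, hBf, ?_⟩
    apply Set.eq_univ_of_forall
    intro a
    obtain ⟨i, hi⟩ := hJcov a
    exact Set.mem_iUnion.mpr ⟨i, hBfsub i (Finset.mem_coe.mpr hi)⟩
  have huk : u ≤ k := hu.2 hkmem
  omega
end

section
/- Let M be a loopless matroid on a finite nonempty set E. Suppose there exist bases B₁, …, B_c of M with B₁ ∪ ⋯ ∪ B_c = E. Then for d = c there exists a map φ : E → S_d = ℝ/dℤ such that for every point x ∈ S_d, the set of elements e with φ(e) lying in the half-open cyclic unit interval [x, x+1) is independent in M. (Thus the circular arboricity is at most the arboricity.) -/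
open Set

/-- `y` lies in the half-open cyclic unit arc `[x, x+1)` of the circle `ℝ/dℤ`. -/
def inUnitArc {d : ℝ} (x y : AddCircle d) : Prop :=
  ∃ t : ℝ, 0 ≤ t ∧ t < 1 ∧ y = x + (t : AddCircle d)

theorem stmt_9 {α : Type*} [Fintype α] [Nonempty α] (M : Matroid α) (hE : M.E = Set.univ)
    (hloop : ∀ e : α, M.Indep {e})
    (c : ℕ) (B : Fin c → Set α)
    (hB : ∀ i, M.IsBase (B i)) (hcover : (⋃ i, B i) = Set.univ) :
    ∃ φ : α → AddCircle (c : ℝ), ∀ x : AddCircle (c : ℝ),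
      M.Indep {e : α | inUnitArc x (φ e)} := by
  have hc : 0 < c := by
    rcases Nat.eq_zero_or_pos c with h0 | h; swap
    · exact h
    subst h0
    exfalso
    obtain ⟨a⟩ := ‹Nonempty α›
    have : a ∈ (⋃ i : Fin 0, B i) := hcover ▸ mem_univ a
    simp at this
  -- choose for each element a base containing it
  have hsel : ∀ e : α, ∃ i : Fin c, e ∈ B i := by
    intro e
    have : e ∈ ⋃ i, B i := hcover ▸ mem_univ e
    simpa using this
  choose f hf using hsel
  refine ⟨fun e => (((f e : ℕ) : ℝ) : AddCircle (c : ℝ)), fun x => ?_⟩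
  -- lift x to a real number
  obtain ⟨x₀, rfl⟩ : ∃ x₀ : ℝ, (x₀ : AddCircle (c : ℝ)) = x := by
    induction x using QuotientAddGroup.induction_on with
    | H z => exact ⟨z, rfl⟩
  set m : ℤ := ⌈x₀⌉ with hm
  set j : Fin c := ⟨(m % (c : ℤ)).toNat, by
    have h1 : 0 ≤ m % (c : ℤ) := Int.emod_nonneg m (by exact_mod_cast hc.ne')
    have h2 : m % (c : ℤ) < c := Int.emod_lt_of_pos m (by exact_mod_cast hc)
    omega⟩ with hj
  have hsub : {e : α | inUnitArc (x₀ : AddCircle (c : ℝ)) (((f e : ℕ) : ℝ) : AddCircle (c : ℝ))} ⊆ B j := by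
    intro e he
    obtain ⟨t, ht0, ht1, heq⟩ := he
    -- heq : ((f e : ℕ) : ℝ) = x₀ + t in AddCircle c
    have heq' : (((f e : ℕ) : ℝ) : AddCircle (c : ℝ)) = ((x₀ + t : ℝ) : AddCircle (c : ℝ)) := by
      rw [heq]; push_cast; ring_nf; rfl
    have hmem := QuotientAddGroup.eq_iff_sub_mem.mp heq'
    obtain ⟨k, hk⟩ := AddSubgroup.mem_zmultiples_iff.mp hmem
    have hk' : ((f e : ℕ) : ℝ) - (x₀ + t) = k * c := by rw [← hk]; simp [zsmul_eq_mul, mul_comm]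
    -- so (f e : ℤ) - k*c is an integer in [x₀, x₀+1), hence equals m
    have hfr : (((f e : ℕ) : ℤ) - k * c : ℝ) = x₀ + t := by push_cast; linarith [hk']
    have hlow : x₀ ≤ ((f e : ℕ) : ℤ) - k * c := by rw [hfr]; linarith
    have hhigh : (((f e : ℕ) : ℤ) - k * c : ℝ) < x₀ + 1 := by rw [hfr]; linarith
    have hint : ((f e : ℕ) : ℤ) - k * c = m := by
      have h1 : m ≤ ((f e : ℕ) : ℤ) - k * c := Int.ceil_le.mpr (by exact_mod_cast hlow)
      have h2 : ((f e : ℕ) : ℤ) - k * c ≤ m := by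
        by_contra h
        push_neg at h
        have : (m : ℝ) + 1 ≤ (((f e : ℕ) : ℤ) - k * c : ℝ) := by exact_mod_cast h
        have := Int.ceil_lt_add_one x₀
        have hmx : (m : ℝ) ≥ x₀ := Int.le_ceil x₀
        linarith
      omega
    -- so f e ≡ m mod c, and 0 ≤ f e < c, so f e = j
    have hfe : ((f e : ℕ) : ℤ) % (c : ℤ) = m % (c : ℤ) := by
      have hrw : ((f e : ℕ) : ℤ) - k * c = ((f e : ℕ) : ℤ) + (-k) * c := by ring
      rw [← hint, hrw, Int.add_mul_emod_self_right]
    have hfj : f e = j := by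
      apply Fin.ext
      have hlt : ((f e : ℕ) : ℤ) < c := by exact_mod_cast (f e).isLt
      have : ((f e : ℕ) : ℤ) % (c : ℤ) = ((f e : ℕ) : ℤ) := Int.emod_eq_of_lt (by positivity) hlt
      show (f e).val = (m % (c : ℤ)).toNat
      omega
    rw [← hfj]
    exact hf e
  exact ((hB j).indep).subset hsub
end

section
/- Let M be a loopless matroid on a finite nonempty set E, let d > 0 be real, and suppose φ : E → ℝ/dℤ is such that for every x, the set {e ∈ E | φ(e) ∈ [x, x+1)} is independent in M. Then for d₀ = ⌈d⌉ there exist bases B₁, …, B_{d₀} of M with B₁ ∪ ⋯ ∪ B_{d₀} = E. (Thus Υ(M) ≤ ⌈Υ_c(M)⌉.) -/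
open Set

theorem stmt_10 {α : Type*} [Fintype α] [Nonempty α] (M : Matroid α) (hE : M.E = Set.univ)
    (hloop : ∀ e : α, M.Indep {e})
    (d : ℝ) (hd : 0 < d) (φ : α → AddCircle d)
    (hφ : ∀ x : AddCircle d, M.Indep {e : α | inUnitArc x (φ e)}) :
    ∃ B : Fin ⌈d⌉₊ → Set α, (∀ i, M.IsBase (B i)) ∧ (⋃ i, B i) = Set.univ := by
  -- every point of the circle lies in one of the arcs [k, k+1), k < ⌈d⌉
  have key : ∀ y : AddCircle d, ∃ k : Fin ⌈d⌉₊,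
      inUnitArc (((k : ℕ) : ℝ) : AddCircle d) y := by
    intro y
    set t : ℝ := (QuotientAddGroup.equivIcoMod hd 0 y : ℝ) with ht
    have htmem : t ∈ Set.Ico (0:ℝ) (0 + d) := (QuotientAddGroup.equivIcoMod hd 0 y).2
    have hty : (t : AddCircle d) = y := (QuotientAddGroup.equivIcoMod hd 0).symm_apply_apply y
    have ht0 : 0 ≤ t := htmem.1
    have htd : t < d := by simpa using htmem.2
    have hfloor0 : 0 ≤ ⌊t⌋ := Int.floor_nonneg.mpr ht0
    set k : ℕ := ⌊t⌋.toNat with hk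
    have hkt : (k : ℝ) = ⌊t⌋ := by
      rw [hk]; exact_mod_cast Int.toNat_of_nonneg hfloor0
    have hklt : k < ⌈d⌉₊ := by
      have h1 : (k : ℝ) ≤ t := hkt ▸ Int.floor_le t
      have h2 : (k : ℝ) < ⌈d⌉₊ := lt_of_le_of_lt h1 (htd.trans_le (Nat.le_ceil d))
      exact_mod_cast h2
    refine ⟨⟨k, hklt⟩, t - k, by linarith [hkt ▸ Int.floor_le t], by
      have := hkt ▸ Int.lt_floor_add_one t; linarith, ?_⟩
    rw [← hty]
    push_cast
    rw [← AddCircle.coe_add]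
    ring_nf
  choose K hK using key
  have hB : ∀ i : Fin ⌈d⌉₊, ∃ B, M.IsBase B ∧
      {e : α | inUnitArc (((i : ℕ) : ℝ) : AddCircle d) (φ e)} ⊆ B :=
    fun i => (hφ _).exists_isBase_superset
  choose B hBbase hBsub using hB
  refine ⟨B, hBbase, ?_⟩
  ext e
  simp only [mem_iUnion, mem_univ, iff_true]
  exact ⟨K (φ e), hBsub _ (hK (φ e))⟩
end

section
/- Let B and B' be two disjoint bases of a matroid M of rank r, with B' = {b'₁, …, b'_r}. Then there is an ordering b₁, …, b_r of the elements of B such that for every i with 0 ≤ i ≤ r, the set {b_{i+1}, …, b_r} ∪ {b'₁, …, b'_i} is a base of M. (Equivalently, in the linear sequence (b₁, …, b_r, b'₁, …, b'_r), every r consecutive elements form a base.) -/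
open Set

theorem rev_exchange {α : Type*} {M : Matroid α} {B₁ B₂ : Set α} {f : α}
    (hB₁ : M.IsBase B₁) (hB₂ : M.IsBase B₂) (hf : f ∈ B₂ \ B₁) :
    ∃ e ∈ B₁ \ B₂, M.IsBase (insert f (B₁ \ {e})) := by
  have hI : M.Indep (insert f (B₁ ∩ B₂)) :=
    hB₂.indep.subset (insert_subset hf.1 inter_subset_right)
  obtain ⟨B₃, hB₃, hIB₃, hB₃sub⟩ := hI.exists_isBase_subset_union_isBase hB₁
  have hfB₃ : f ∈ B₃ := hIB₃ (mem_insert _ _)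
  have hsub : B₃ ⊆ insert f B₁ := by
    refine hB₃sub.trans ?_
    rw [insert_union]
    exact insert_subset_insert (union_subset inter_subset_left subset_rfl)
  have hdiff : B₃ \ B₁ = {f} := by
    apply Subset.antisymm
    · intro x hx
      rcases hsub hx.1 with h | h
      · exact h
      · exact absurd h hx.2
    · simpa using ⟨hfB₃, hf.2⟩
  have hcard : (B₁ \ B₃).encard = 1 := by
    rw [hB₁.encard_diff_comm hB₃, hdiff, encard_singleton]
  obtain ⟨e, he⟩ := encard_eq_one.mp hcard
  have heB₁ : e ∈ B₁ \ B₃ := he ▸ rfl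
  refine ⟨e, ⟨heB₁.1, fun heB₂ => heB₁.2 (hIB₃ (mem_insert_of_mem _ ⟨heB₁.1, heB₂⟩))⟩, ?_⟩
  have : insert f (B₁ \ {e}) = B₃ := by
    apply Subset.antisymm
    · refine insert_subset hfB₃ ?_
      intro x hx
      by_contra hxB₃
      have : x ∈ B₁ \ B₃ := ⟨hx.1, hxB₃⟩
      rw [he] at this
      exact hx.2 this
    · intro x hx
      rcases hsub hx with h | h
      · exact h ▸ mem_insert _ _
      · refine mem_insert_of_mem _ ⟨h, ?_⟩
        rintro rfl
        exact heB₁.2 hx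
  rw [this]; exact hB₃

theorem stmt_18 {α : Type*} (M : Matroid α) (r : ℕ) (B B' : Set α)
    (hB : M.IsBase B) (hB' : M.IsBase B') (hdisj : Disjoint B B')
    (b' : Fin r → α) (hb'inj : Function.Injective b') (hb'range : Set.range b' = B') :
    ∃ b : Fin r → α, Function.Injective b ∧ Set.range b = B ∧
      ∀ i : ℕ, i ≤ r →
        M.IsBase ((b '' {j : Fin r | i ≤ (j : ℕ)}) ∪ (b' '' {j : Fin r | (j : ℕ) < i})) := by
  have hBcard : B.encard = r := by
    rw [hB.encard_eq_encard_of_isBase hB', ← hb'range, ← image_univ,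
      hb'inj.injOn.encard_image, encard_univ, ENat.card_eq_coe_fintype_card,
      Fintype.card_fin]
  suffices h : ∀ k : ℕ, k ≤ r → ∃ b : Fin r → α, Function.Injective b ∧ Set.range b = B ∧
      ∀ i : ℕ, i ≤ k →
        M.IsBase ((b '' {j : Fin r | i ≤ (j : ℕ)}) ∪ (b' '' {j : Fin r | (j : ℕ) < i})) by
    obtain ⟨b, h1, h2, h3⟩ := h r le_rfl
    exact ⟨b, h1, h2, fun i hi => h3 i hi⟩
  intro k
  induction k with
  | zero =>
    intro _
    obtain ⟨b0, hb0inj, hb0range⟩ : ∃ b0 : Fin r → α, Function.Injective b0 ∧ range b0 = B := by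
      obtain ⟨s, rfl⟩ : ∃ s : Finset α, ↑s = B := by
        have : B.Finite := finite_of_encard_eq_coe hBcard
        exact ⟨this.toFinset, this.coe_toFinset⟩
      have hcard : s.card = r := by
        rwa [encard_coe_eq_coe_finsetCard, Nat.cast_inj] at hBcard
      set f := (s.equivFinOfCardEq hcard).symm with hf
      exact ⟨fun i => (f i : α), fun i j hij => f.injective (Subtype.ext hij), by
        ext x; simp only [mem_range, Finset.mem_coe]
        constructor
        · rintro ⟨i, rfl⟩; exact (f i).2
        · intro hx; exact ⟨f.symm ⟨x, hx⟩, by simp⟩⟩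
    refine ⟨b0, hb0inj, hb0range, fun i hi => ?_⟩
    interval_cases i
    have h1 : {j : Fin r | 0 ≤ (j : ℕ)} = univ := by ext j; simp
    have h2 : {j : Fin r | (j : ℕ) < 0} = ∅ := by ext j; simp
    rw [h1, h2, image_univ, image_empty, union_empty, hb0range]
    exact hB
  | succ k ih =>
    intro hk1
    obtain ⟨b, hbinj, hbrange, hbase⟩ := ih (Nat.le_of_succ_le hk1)
    have hkr : k < r := hk1
    set kk : Fin r := ⟨k, hkr⟩ with hkk
    set C := (b '' {j : Fin r | k ≤ (j : ℕ)}) ∪ (b' '' {j : Fin r | (j : ℕ) < k}) with hC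
    have hCbase : M.IsBase C := hbase k le_rfl
    have hb'img_sub : b' '' {j : Fin r | (j : ℕ) < k} ⊆ B' := by
      rw [← hb'range]; exact image_subset_range _ _
    have hbimg_sub : b '' {j : Fin r | k ≤ (j : ℕ)} ⊆ B := by
      rw [← hbrange]; exact image_subset_range _ _
    have hfB' : b' kk ∈ B' := hb'range ▸ mem_range_self kk
    have hfC : b' kk ∈ B' \ C := by
      refine ⟨hfB', ?_⟩
      rintro (h | h)
      · exact absurd (hbimg_sub h) (disjoint_right.mp hdisj hfB')
      · obtain ⟨j, hj, hj2⟩ := h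
        have hje : j = kk := hb'inj hj2
        rw [hje] at hj
        simp only [mem_setOf_eq, hkk] at hj
        omega
    obtain ⟨e, heC, hnew⟩ := rev_exchange hCbase hB' hfC
    have heb : e ∈ b '' {j : Fin r | k ≤ (j : ℕ)} := by
      rcases heC.1 with h | h
      · exact h
      · exact absurd (hb'img_sub h) heC.2
    obtain ⟨j₀, hj₀, hj₀e⟩ := heb
    have hkj₀ : k ≤ (j₀ : ℕ) := hj₀
    set σ := Equiv.swap kk j₀ with hσ
    have himg : ∀ S : Set (Fin r), σ '' S = σ ⁻¹' S := by
      intro S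
      rw [Equiv.image_eq_preimage_symm]
      simp [hσ]
    refine ⟨b ∘ σ, hbinj.comp σ.injective, ?_, ?_⟩
    · rw [range_comp]
      simp [hbrange]
    intro i hi
    rcases Nat.lt_or_ge i (k+1) with hik | hik
    · -- i ≤ k : images unchanged
      have hik' : i ≤ k := Nat.lt_succ_iff.mp hik
      have h1 : σ '' {j : Fin r | i ≤ (j : ℕ)} = {j : Fin r | i ≤ (j : ℕ)} := by
        rw [himg]
        ext x
        simp only [mem_preimage, mem_setOf_eq, hσ]
        rcases eq_or_ne x kk with rfl | hx1
        · rw [Equiv.swap_apply_left]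
          simp only [hkk]
          omega
        rcases eq_or_ne x j₀ with rfl | hx2
        · rw [Equiv.swap_apply_right]
          simp only [hkk]
          omega
        · rw [Equiv.swap_apply_of_ne_of_ne hx1 hx2]
      have h2 : (b ∘ σ) '' {j : Fin r | i ≤ (j : ℕ)} = b '' {j : Fin r | i ≤ (j : ℕ)} := by
        rw [image_comp, h1]
      rw [h2]
      exact hbase i hik'
    · -- i = k+1
      have hik' : i = k + 1 := le_antisymm hi hik
      subst hik'
      have h1 : σ '' {j : Fin r | k + 1 ≤ (j : ℕ)} = {j : Fin r | k ≤ (j : ℕ)} \ {j₀} := by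
        rw [himg]
        ext x
        simp only [mem_preimage, mem_setOf_eq, mem_diff, mem_singleton_iff, hσ]
        have hkkval : (kk : ℕ) = k := rfl
        rcases eq_or_ne x kk with rfl | hx1
        · rw [Equiv.swap_apply_left]
          simp only [ne_eq, Fin.ext_iff, hkkval, Fin.val_mk]
          omega
        rcases eq_or_ne x j₀ with rfl | hx2
        · rw [Equiv.swap_apply_right]
          simp only [ne_eq, Fin.ext_iff, hkkval, Fin.val_mk]
          exact iff_of_false (by omega) (by simp)
        · rw [Equiv.swap_apply_of_ne_of_ne hx1 hx2]
          have hv1 : (x : ℕ) ≠ k := fun h => hx1 (Fin.ext (by rw [h, hkkval]))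
          have hv2 : (x : ℕ) ≠ (j₀ : ℕ) := fun h => hx2 (Fin.ext h)
          simp only [ne_eq, Fin.ext_iff]
          omega
      have h2 : (b ∘ σ) '' {j : Fin r | k + 1 ≤ (j : ℕ)}
          = b '' {j : Fin r | k ≤ (j : ℕ)} \ {e} := by
        rw [image_comp, h1, image_diff hbinj, image_singleton, hj₀e]
      have h3 : b' '' {j : Fin r | (j : ℕ) < k + 1}
          = b' '' {j : Fin r | (j : ℕ) < k} ∪ {b' kk} := by
        have : {j : Fin r | (j : ℕ) < k + 1} = {j : Fin r | (j : ℕ) < k} ∪ {kk} := by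
          ext x
          simp only [mem_setOf_eq, union_singleton, mem_insert_iff, Fin.ext_iff, hkk]
          omega
        rw [this, image_union, image_singleton]
      have henb' : e ∉ b' '' {j : Fin r | (j : ℕ) < k} := fun h => heC.2 (hb'img_sub h)
      have h4 : b '' {j : Fin r | k ≤ (j : ℕ)} \ {e}
          ∪ (b' '' {j : Fin r | (j : ℕ) < k} ∪ {b' kk}) = insert (b' kk) (C \ {e}) := by
        rw [insert_eq, hC, union_diff_distrib, diff_singleton_eq_self henb',
          ← union_assoc, union_comm]
      rw [h2, h3, h4]
      exact hnew
end

section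
/- Let M be a loopless matroid on a finite set E with |E| = m, rank function r, and rank r = r(M), satisfying r·|A| ≤ m·r(A) for all A ⊆ E (so in particular r·m ≤ m·r(E), i.e., equality |E|·r = m·r(E) holds for A = E). Suppose φ : E → ZMod m is a map such that for every x ∈ ZMod m, the set {e ∈ E | x ∈ {φ(e), …, φ(e)+r−1}} is independent. If gcd(r, m) = 1, then φ is a bijection from E to ZMod m. -/
open Set

theorem stmt_19 {α : Type*} [Fintype α] (M : Matroid α) (hE : M.E = Set.univ)
    (hloop : ∀ e : α, M.Indep {e}) (m r : ℕ)
    (hm : m = Fintype.card α) (hr : r = mRank M Set.univ)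
    (hcond : ∀ A : Finset α, r * A.card ≤ m * mRank M (A : Set α))
    (φ : α → ZMod m)
    (hφ : ∀ x : ZMod m, M.Indep {e : α | x ∈ cycInt r (φ e)})
    (hgcd : Nat.gcd r m = 1) :
    Function.Bijective φ := by
  classical
  -- any independent set has ncard ≤ r
  have hrle : ∀ I : Set α, M.Indep I → I.ncard ≤ r := by
    intro I hI
    rw [hr]
    apply le_csSup
    · refine ⟨Fintype.card α, ?_⟩
      rintro n ⟨J, -, -, rfl⟩
      calc J.ncard ≤ (Set.univ : Set α).ncard :=
            Set.ncard_le_ncard (Set.subset_univ J) Set.finite_univ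
        _ = Fintype.card α := by rw [Set.ncard_univ, Nat.card_eq_fintype_card]
    · exact ⟨I, Set.subset_univ I, hI, rfl⟩
  -- r ≤ m
  have hrm : r ≤ m := by
    rw [hr, hm]
    apply csSup_le
    · exact ⟨0, ∅, Set.empty_subset _, M.empty_indep, Set.ncard_empty α⟩
    · rintro n ⟨J, -, -, rfl⟩
      calc J.ncard ≤ (Set.univ : Set α).ncard :=
            Set.ncard_le_ncard (Set.subset_univ J) Set.finite_univ
        _ = Fintype.card α := by rw [Set.ncard_univ, Nat.card_eq_fintype_card]
  have hm0 : 0 < m := by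
    rcases Nat.eq_zero_or_pos m with h | h
    · exfalso
      have hr0 : r = 0 := by omega
      rw [hr0, h] at hgcd
      simp at hgcd
    · exact h
  haveI : NeZero m := ⟨hm0.ne'⟩
  -- case r = 0 : then m = 1
  rcases Nat.eq_zero_or_pos r with hr0 | hr1
  · have hm1 : m = 1 := by rw [hr0] at hgcd; simpa using hgcd
    haveI : Subsingleton α := by
      rw [← Fintype.card_le_one_iff_subsingleton, ← hm, hm1]
    refine (Fintype.bijective_iff_injective_and_card φ).2
      ⟨Function.injective_of_subsingleton φ, ?_⟩
    rw [ZMod.card, hm]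
  -- main case
  set N : ZMod m → ℕ := fun x => (Finset.univ.filter fun e => φ e = x).card with hN
  -- casts of naturals < m are injective
  have hcastinj : ∀ k k' : ℕ, k < m → k' < m → (k : ZMod m) = (k' : ZMod m) → k = k' := by
    intro k k' hk hk' h
    have := congrArg ZMod.val h
    rwa [ZMod.val_cast_of_lt hk, ZMod.val_cast_of_lt hk'] at this
  -- the window sum equals the cardinality of a "covering" set
  have hwin : ∀ x : ZMod m, ∑ k ∈ Finset.range r, N (x - k) =
      (Finset.univ.filter fun e => x ∈ cycInt r (φ e)).card := by
    intro x
    have hsplit : (Finset.univ.filter fun e => x ∈ cycInt r (φ e)) =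
        (Finset.range r).biUnion fun k => Finset.univ.filter fun e => φ e = x - k := by
      ext e
      simp only [Finset.mem_filter, Finset.mem_univ, true_and, Finset.mem_biUnion,
        Finset.mem_range, cycInt, Set.mem_setOf_eq]
      constructor
      · rintro ⟨k, hk, hxe⟩
        exact ⟨k, hk, by rw [hxe]; ring⟩
      · rintro ⟨k, hk, hxe⟩
        exact ⟨k, hk, by rw [hxe]; ring⟩
    rw [hsplit, Finset.card_biUnion]
    intro k hk k' hk' hne
    simp only [Finset.coe_range, Set.mem_Iio] at hk hk'
    rw [Function.onFun, Finset.disjoint_left]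
    rintro e he1 he2
    simp only [Finset.mem_filter, Finset.mem_univ, true_and] at he1 he2
    apply hne
    apply hcastinj k k' (lt_of_lt_of_le hk hrm) (lt_of_lt_of_le hk' hrm)
    have h1 : x - (k : ZMod m) = x - (k' : ZMod m) := by rw [← he1, ← he2]
    have h2 := sub_right_injective h1
    exact h2.symm ▸ rfl
  -- each window sum is at most r
  have hle : ∀ x : ZMod m, ∑ k ∈ Finset.range r, N (x - k) ≤ r := by
    intro x
    rw [hwin x]
    have hset : {e : α | x ∈ cycInt r (φ e)} =
        ((Finset.univ.filter fun e => x ∈ cycInt r (φ e)) : Finset α) := by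
      ext e; simp
    have := hrle _ (hφ x)
    rwa [hset, Set.ncard_coe_finset] at this
  -- total count
  have htotN : ∑ x : ZMod m, N x = m := by
    have := Finset.card_eq_sum_card_fiberwise
      (f := φ) (s := Finset.univ) (t := Finset.univ) (fun e _ => Finset.mem_univ _)
    have h2 : ∑ x : ZMod m, N x = Fintype.card α := by
      simpa [Finset.card_univ, hN] using this.symm
    exact h2.trans hm.symm
  have htot : ∑ x : ZMod m, ∑ k ∈ Finset.range r, N (x - k) = m * r := by
    rw [Finset.sum_comm]
    have hshift : ∀ k : ℕ, ∑ x : ZMod m, N (x - (k : ZMod m)) = m := by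
      intro k
      exact (Fintype.sum_equiv (Equiv.subRight (k : ZMod m)) _ N (fun x => rfl)).trans htotN
    rw [Finset.sum_congr rfl (fun k _ => hshift k)]
    simp [mul_comm]
  -- each window sum equals r
  have heq : ∀ x : ZMod m, ∑ k ∈ Finset.range r, N (x - k) = r := by
    have hcard : (Finset.univ : Finset (ZMod m)).card = m := by
      rw [Finset.card_univ, ZMod.card]
    have hsum : ∑ x : ZMod m, ∑ k ∈ Finset.range r, N (x - k) =
        ∑ _x : ZMod m, r := by
      rw [htot, Finset.sum_const, hcard, smul_eq_mul]
    have := (Finset.sum_eq_sum_iff_of_le (fun x _ => hle x)).mp hsum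
    intro x
    exact this x (Finset.mem_univ x)
  -- periodicity: N (y + r) = N y
  have hper : ∀ y : ZMod m, N (y + r) = N y := by
    intro y
    obtain ⟨s, hs⟩ : ∃ s, r = s + 1 := ⟨r - 1, by omega⟩
    set x : ZMod m := y + r - 1 with hx
    have h1 := heq (x + 1)
    have h2 := heq x
    rw [hs, Finset.sum_range_succ'] at h1
    rw [hs, Finset.sum_range_succ] at h2
    have hre : ∀ k ∈ Finset.range s, N (x + 1 - ((k + 1 : ℕ) : ZMod m)) = N (x - k) := by
      intro k _
      congr 1
      push_cast
      ring
    rw [Finset.sum_congr rfl hre] at h1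
    simp only [Nat.cast_zero, sub_zero] at h1
    have key : N (x + 1) = N (x - s) := by omega
    have e1 : x + 1 = y + r := by rw [hx]; ring
    have e2 : x - (s : ZMod m) = y := by
      rw [hx]
      have : ((s : ℕ) : ZMod m) = (r : ZMod m) - 1 := by
        rw [hs]; push_cast; ring
      rw [this]; ring
    rw [e1, e2] at key
    exact key
  -- N is constant
  have hmul : ∀ c : ℕ, ∀ y : ZMod m, N (y + ((c * r : ℕ) : ZMod m)) = N y := by
    intro c
    induction c with
    | zero => intro y; simp
    | succ c ih =>
      intro y
      have : y + (((c + 1) * r : ℕ) : ZMod m) = (y + ((c * r : ℕ) : ZMod m)) + (r : ZMod m) := by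
        push_cast; ring
      rw [this, hper, ih]
  have hconst : ∀ x : ZMod m, N x = N 0 := by
    intro x
    have hco : Nat.Coprime r m := hgcd
    have hunit : (r : ZMod m) * (r : ZMod m)⁻¹ = 1 := ZMod.coe_mul_inv_eq_one r hco
    set c : ℕ := (x * (r : ZMod m)⁻¹).val with hc
    have hcx : ((c * r : ℕ) : ZMod m) = x := by
      push_cast
      rw [hc, ZMod.natCast_val, ZMod.cast_id]
      linear_combination x * hunit
    have := hmul c 0
    rw [zero_add, hcx] at this
    omega
  -- N 0 = 1
  have hN1 : ∀ x : ZMod m, N x = 1 := by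
    have hsum : ∑ x : ZMod m, N x = m * N 0 := by
      rw [Finset.sum_congr rfl (fun x _ => hconst x), Finset.sum_const, Finset.card_univ,
        ZMod.card, smul_eq_mul]
    rw [htotN] at hsum
    have h0 : N 0 = 1 := by
      have := hsum
      nlinarith [hm0]
    intro x
    rw [hconst x, h0]
  constructor
  · intro a b hab
    have ha : a ∈ Finset.univ.filter fun e => φ e = φ b := by
      simp [hab]
    have hb : b ∈ Finset.univ.filter fun e => φ e = φ b := by simp
    have hc := hN1 (φ b)
    have := Finset.card_le_one.mp (le_of_eq hc) a ha b hb
    exact this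
  · intro x
    have hc := hN1 x
    have hc' : (Finset.univ.filter fun e => φ e = x).card = 1 := hc
    have hne : (Finset.univ.filter fun e => φ e = x).Nonempty :=
      Finset.card_pos.mp (by omega)
    obtain ⟨e, he⟩ := hne
    simp only [Finset.mem_filter, Finset.mem_univ, true_and] at he
    exact ⟨e, he⟩
end
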